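/- Let k ≥ 1 and define f : 𝔽_{2^k} × 𝔽_{2^k} × 𝔽_{2^k} → 𝔽₂ by f(x, y, z) = Tr(x·y·z). Then f is a directional affine disperser for dimension 2k + 1; that is, for every nonzero a ∈ 𝔽_{2^k}³, the directional derivative D_a f is non-constant on every affine subspace of 𝔽_{2^k}³ of dimension at least 2k + 1. -/

import Mathlib

set_option maxHeartbeats 1000000

open Module

private noncomputable def Bform {F : Type*} [Field F] [Algebra (ZMod 2) F]
    (a1 a2 a3 : F) : (F × F × F) →ₗ[ZMod 2] (F × F × F) →ₗ[ZMod 2] ZMod 2 :=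
  LinearMap.mk₂ (ZMod 2)
    (fun u v => Algebra.trace (ZMod 2) F
      (u.1 * (a2 * v.2.2 + a3 * v.2.1) + u.2.1 * (a1 * v.2.2 + a3 * v.1)
        + u.2.2 * (a1 * v.2.1 + a2 * v.1)))
    (fun m m' n => by
      rw [← map_add]; congr 1
      simp only [Prod.fst_add, Prod.snd_add]; ring)
    (fun c m n => by
      rw [← map_smul]; congr 1
      simp only [Prod.smul_fst, Prod.smul_snd]
      simp only [Algebra.smul_def]; ring)
    (fun m n n' => by
      rw [← map_add]; congr 1
      simp only [Prod.fst_add, Prod.snd_add]; ring)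
    (fun c m n => by
      rw [← map_smul]; congr 1
      simp only [Prod.smul_fst, Prod.smul_snd]
      simp only [Algebra.smul_def]; ring)

private lemma Bform_apply {F : Type*} [Field F] [Algebra (ZMod 2) F]
    (a1 a2 a3 : F) (u v : F × F × F) :
    Bform a1 a2 a3 u v = Algebra.trace (ZMod 2) F
      (u.1 * (a2 * v.2.2 + a3 * v.2.1) + u.2.1 * (a1 * v.2.2 + a3 * v.1)
        + u.2.2 * (a1 * v.2.1 + a2 * v.1)) := rfl

private noncomputable def eMap {F : Type*} [Field F] [Algebra (ZMod 2) F]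
    (a1 a2 a3 : F) : F →ₗ[ZMod 2] F × F × F where
  toFun c := (c * a1, c * a2, c * a3)
  map_add' x y := by simp [Prod.mk_add_mk, add_mul]
  map_smul' r x := by simp [Prod.smul_mk, smul_mul_assoc]

/-- Let `F = 𝔽_{2^k}` (with `k ≥ 1`) and `f(x, y, z) = Tr(x·y·z)` on `F³`, viewed as
an `𝔽₂`-vector space of dimension `3k`. Then `f` is a directional affine disperser
for dimension `2k + 1`: for every nonzero `a ∈ F³`, the directional derivative
`D_a f(w) = f(w + a) + f(w)` is non-constant on every affine subspace `S = V + b` of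
dimension at least `2k + 1`. -/
theorem trace_directional_affine_disperser {k : ℕ} (hk : 1 ≤ k)
    {F : Type*} [Field F] [Fintype F] [Algebra (ZMod 2) F]
    (hF : Fintype.card F = 2 ^ k)
    (f : F × F × F → ZMod 2)
    (hf : ∀ x y z : F,
      f (x, y, z) = Algebra.trace (ZMod 2) F (x * y * z)) :
    ∀ a : F × F × F, a ≠ 0 →
      ∀ (V : Submodule (ZMod 2) (F × F × F)) (b : F × F × F),
        2 * k + 1 ≤ Module.finrank (ZMod 2) V →
          ∃ x ∈ (fun v => v + b) '' (V : Set (F × F × F)),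
            ∃ y ∈ (fun v => v + b) '' (V : Set (F × F × F)),
              f (x + a) + f x ≠ f (y + a) + f y := by
  intro a ha V b hV
  haveI : FiniteDimensional (ZMod 2) F := Module.Finite.of_finite
  haveI : CharP F 2 := charP_of_injective_algebraMap (algebraMap (ZMod 2) F).injective 2
  have h2 : (2 : F) = 0 := CharTwo.two_eq_zero
  have hkF : Module.finrank (ZMod 2) F = k := by
    have := card_eq_pow_finrank (K := ZMod 2) (V := F)
    rw [ZMod.card, hF] at this
    exact (Nat.pow_right_injective le_rfl this.symm)
  by_contra hcon
  push_neg at hcon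
  obtain ⟨a1, a2, a3⟩ := a
  obtain ⟨b1, b2, b3⟩ := b
  -- trace nondegeneracy
  have htr : ∀ c : F, (∀ x : F, Algebra.trace (ZMod 2) F (x * c) = 0) → c = 0 := by
    intro c hc
    exact (traceForm_nondegenerate (ZMod 2) F).1 c fun n => by
      rw [Algebra.traceForm_apply, mul_comm]; exact hc n
  -- the subspace V is totally isotropic for the bilinear form
  have hiso : ∀ u ∈ V, ∀ v ∈ V, Bform a1 a2 a3 u v = 0 := by
    intro u hu v hv
    obtain ⟨u1, u2, u3⟩ := u
    obtain ⟨v1, v2, v3⟩ := v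
    have e1 := hcon ((u1,u2,u3) + (v1,v2,v3) + (b1,b2,b3))
      ⟨(u1,u2,u3) + (v1,v2,v3), V.add_mem hu hv, rfl⟩
      (b1,b2,b3) ⟨0, V.zero_mem, zero_add _⟩
    have e2 := hcon ((u1,u2,u3) + (b1,b2,b3)) ⟨(u1,u2,u3), hu, rfl⟩
      (b1,b2,b3) ⟨0, V.zero_mem, zero_add _⟩
    have e3 := hcon ((v1,v2,v3) + (b1,b2,b3)) ⟨(v1,v2,v3), hv, rfl⟩
      (b1,b2,b3) ⟨0, V.zero_mem, zero_add _⟩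
    have hst : Bform a1 a2 a3 (u1,u2,u3) (v1,v2,v3)
        = (f ((u1,u2,u3) + (v1,v2,v3) + (b1,b2,b3) + (a1,a2,a3))
            + f ((u1,u2,u3) + (v1,v2,v3) + (b1,b2,b3)))
          + (f ((u1,u2,u3) + (b1,b2,b3) + (a1,a2,a3)) + f ((u1,u2,u3) + (b1,b2,b3)))
          + (f ((v1,v2,v3) + (b1,b2,b3) + (a1,a2,a3)) + f ((v1,v2,v3) + (b1,b2,b3)))
          + (f ((b1,b2,b3) + (a1,a2,a3)) + f (b1,b2,b3)) := by
      rw [Bform_apply]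
      simp only [Prod.mk_add_mk, hf, ← map_add]
      congr 1
      linear_combination (-(2*a1*a2*a3 + 2*a1*a2*b3 + a1*a2*u3 + a1*a2*v3 + 2*a1*a3*b2
        + a1*a3*u2 + a1*a3*v2 + 2*a1*b2*b3 + a1*b2*u3 + a1*b2*v3 + a1*b3*u2 + a1*b3*v2
        + a1*u2*u3 + a1*v2*v3 + 2*a2*a3*b1 + a2*a3*u1 + a2*a3*v1 + 2*a2*b1*b3 + a2*b1*u3
        + a2*b1*v3 + a2*b3*u1 + a2*b3*v1 + a2*u1*u3 + a2*v1*v3 + 2*a3*b1*b2 + a3*b1*u2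
        + a3*b1*v2 + a3*b2*u1 + a3*b2*v1 + a3*u1*u2 + a3*v1*v2 + 4*b1*b2*b3 + 2*b1*b2*u3
        + 2*b1*b2*v3 + 2*b1*b3*u2 + 2*b1*b3*v2 + 2*b1*u2*u3 + b1*u2*v3 + b1*u3*v2
        + 2*b1*v2*v3 + 2*b2*b3*u1 + 2*b2*b3*v1 + 2*b2*u1*u3 + b2*u1*v3 + b2*u3*v1
        + 2*b2*v1*v3 + 2*b3*u1*u2 + b3*u1*v2 + b3*u2*v1 + 2*b3*v1*v2 + 2*u1*u2*u3
        + u1*u2*v3 + u1*u3*v2 + u1*v2*v3 + u2*u3*v1 + u2*v1*v3 + u3*v1*v2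
        + 2*v1*v2*v3)) * h2
    rw [hst, e1, e2, e3]
    simp [CharTwo.add_self_eq_zero]
  -- not all of a1 a2 a3 are zero
  have ha' : a1 ≠ 0 ∨ a2 ≠ 0 ∨ a3 ≠ 0 := by
    by_contra h
    push_neg at h
    exact ha (by simp [Prod.ext_iff, h.1, h.2.1, h.2.2])
  -- eMap is injective
  have hinj : Function.Injective (eMap a1 a2 a3 (F := F)) := by
    rw [injective_iff_map_eq_zero]
    intro c hc
    have hc' : c * a1 = 0 ∧ c * a2 = 0 ∧ c * a3 = 0 := by
      simpa [eMap, Prod.ext_iff] using hc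
    rcases ha' with h | h | h
    · exact (mul_eq_zero.mp hc'.1).resolve_right h
    · exact (mul_eq_zero.mp hc'.2.1).resolve_right h
    · exact (mul_eq_zero.mp hc'.2.2).resolve_right h
  -- kernel of the form is contained in the range of eMap
  have hker : ∀ v : F × F × F, (∀ u, Bform a1 a2 a3 u v = 0) →
      v ∈ LinearMap.range (eMap a1 a2 a3) := by
    intro v hv
    obtain ⟨v1, v2, v3⟩ := v
    have hA1 : a2 * v3 + a3 * v2 = 0 := by
      refine htr _ fun x => ?_
      have := hv (x, 0, 0)
      rw [Bform_apply] at this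
      simpa using this
    have hA2 : a1 * v3 + a3 * v1 = 0 := by
      refine htr _ fun x => ?_
      have := hv (0, x, 0)
      rw [Bform_apply] at this
      simpa using this
    have hA3 : a1 * v2 + a2 * v1 = 0 := by
      refine htr _ fun x => ?_
      have := hv (0, 0, x)
      rw [Bform_apply] at this
      simpa using this
    have hq1 : a2 * v3 = a3 * v2 := by linear_combination hA1 - (a3 * v2) * h2
    have hq2 : a1 * v3 = a3 * v1 := by linear_combination hA2 - (a3 * v1) * h2
    have hq3 : a1 * v2 = a2 * v1 := by linear_combination hA3 - (a2 * v1) * h2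
    rcases ha' with h | h | h
    · refine ⟨v1 * a1⁻¹, ?_⟩
      simp only [eMap, LinearMap.coe_mk, AddHom.coe_mk, Prod.ext_iff]
      refine ⟨by field_simp, by field_simp; linear_combination -hq3,
        by field_simp; linear_combination -hq2⟩
    · refine ⟨v2 * a2⁻¹, ?_⟩
      simp only [eMap, LinearMap.coe_mk, AddHom.coe_mk, Prod.ext_iff]
      refine ⟨by field_simp; linear_combination hq3, by field_simp,
        by field_simp; linear_combination -hq1⟩
    · refine ⟨v3 * a3⁻¹, ?_⟩
      simp only [eMap, LinearMap.coe_mk, AddHom.coe_mk, Prod.ext_iff]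
      refine ⟨by field_simp; linear_combination hq2,
        by field_simp; linear_combination hq1, by field_simp⟩
  -- set up the restricted map into the dual
  set Φ : V →ₗ[ZMod 2] Module.Dual (ZMod 2) (F × F × F) :=
    (Bform a1 a2 a3).flip.comp V.subtype with hΦdef
  have hrn := LinearMap.finrank_range_add_finrank_ker Φ
  have hrange : LinearMap.range Φ ≤ V.dualAnnihilator := by
    rintro ψ ⟨⟨v, hv⟩, rfl⟩
    rw [Submodule.mem_dualAnnihilator]
    intro w hw
    simpa [hΦdef, LinearMap.flip_apply] using hiso w hw v hv
  have hkerle : finrank (ZMod 2) (LinearMap.ker Φ) ≤ k := by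
    have hle : Submodule.map V.subtype (LinearMap.ker Φ) ≤
        LinearMap.range (eMap a1 a2 a3) := by
      rintro w ⟨⟨v, hv⟩, hvk, rfl⟩
      refine hker v fun u => ?_
      have : Φ ⟨v, hv⟩ u = 0 := by rw [LinearMap.mem_ker.mp hvk]; rfl
      simpa [hΦdef, LinearMap.flip_apply] using this
    calc finrank (ZMod 2) (LinearMap.ker Φ)
        = finrank (ZMod 2) (Submodule.map V.subtype (LinearMap.ker Φ)) :=
          (Submodule.finrank_map_subtype_eq V _).symm
      _ ≤ finrank (ZMod 2) (LinearMap.range (eMap a1 a2 a3)) :=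
          Submodule.finrank_mono hle
      _ = finrank (ZMod 2) F := LinearMap.finrank_range_of_inj hinj
      _ = k := hkF
  have hrle : finrank (ZMod 2) (LinearMap.range Φ) ≤
      finrank (ZMod 2) V.dualAnnihilator := Submodule.finrank_mono hrange
  have hq := Submodule.finrank_quotient_add_finrank V
  have hq2 : finrank (ZMod 2) ((F × F × F) ⧸ V) = finrank (ZMod 2) V.dualAnnihilator :=
    (Subspace.quotEquivAnnihilator V).finrank_eq
  have hWdim : finrank (ZMod 2) (F × F × F) = 3 * k := by
    rw [Module.finrank_prod, Module.finrank_prod, hkF]; ring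
  rw [hWdim] at hq
  rw [hq2] at hq
  omega
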